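/- Suppose U is twice continuously differentiable. For every m ≥ 1, the full numerical RAHMC proposal map F = (Φ⁻_ε)^m ∘ (Φ⁺_ε)^m is volume preserving: the determinant of its Jacobian D F(z) has absolute value 1 at every z ∈ ℝᵈ × ℝᵈ. -/

import Mathlib

open Matrix

noncomputable section

/-- Action of a matrix on a vector in Euclidean space. -/
def mvec {d : ℕ} (A : Matrix (Fin d) (Fin d) ℝ) (p : EuclideanSpace ℝ (Fin d)) :
    EuclideanSpace ℝ (Fin d) :=
  WithLp.toLp 2 (A.mulVec p)

/-- The leapfrog step `P_ε` with potential `U` and inverse mass matrix `Sinv = Σ⁻¹`. -/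
def leapfrog {d : ℕ} (U : EuclideanSpace ℝ (Fin d) → ℝ) (Sinv : Matrix (Fin d) (Fin d) ℝ)
    (ε : ℝ) (z : EuclideanSpace ℝ (Fin d) × EuclideanSpace ℝ (Fin d)) :
    EuclideanSpace ℝ (Fin d) × EuclideanSpace ℝ (Fin d) :=
  let phalf := z.2 - (ε / 2) • gradient U z.1
  let q' := z.1 + ε • mvec Sinv phalf
  (q', phalf - (ε / 2) • gradient U q')

/-- The momentum-rescaling map `ξ_t(q, p) = (q, e^{γ t} p)`. -/
def xi {d : ℕ} (γ t : ℝ) (z : EuclideanSpace ℝ (Fin d) × EuclideanSpace ℝ (Fin d)) :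
    EuclideanSpace ℝ (Fin d) × EuclideanSpace ℝ (Fin d) :=
  (z.1, Real.exp (γ * t) • z.2)

/-- The repelling numerical step `Φ⁺_ε = ξ_{ε/2} ∘ P_ε ∘ ξ_{ε/2}`. -/
def stepPlus {d : ℕ} (U : EuclideanSpace ℝ (Fin d) → ℝ) (Sinv : Matrix (Fin d) (Fin d) ℝ)
    (γ ε : ℝ) :
    EuclideanSpace ℝ (Fin d) × EuclideanSpace ℝ (Fin d) →
      EuclideanSpace ℝ (Fin d) × EuclideanSpace ℝ (Fin d) :=
  xi γ (ε / 2) ∘ leapfrog U Sinv ε ∘ xi γ (ε / 2)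

/-- The attracting numerical step `Φ⁻_ε = ξ_{−ε/2} ∘ P_ε ∘ ξ_{−ε/2}`. -/
def stepMinus {d : ℕ} (U : EuclideanSpace ℝ (Fin d) → ℝ) (Sinv : Matrix (Fin d) (Fin d) ℝ)
    (γ ε : ℝ) :
    EuclideanSpace ℝ (Fin d) × EuclideanSpace ℝ (Fin d) →
      EuclideanSpace ℝ (Fin d) × EuclideanSpace ℝ (Fin d) :=
  xi γ (-(ε / 2)) ∘ leapfrog U Sinv ε ∘ xi γ (-(ε / 2))

section Aux

variable {M N : Type*} [AddCommGroup M] [Module ℝ M] [FiniteDimensional ℝ M]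
  [AddCommGroup N] [Module ℝ N] [FiniteDimensional ℝ N]

/-- Determinant of a product map. -/
lemma aux_det_prodMap (f : M →ₗ[ℝ] M) (g : N →ₗ[ℝ] N) :
    LinearMap.det (f.prodMap g) = LinearMap.det f * LinearMap.det g := by
  classical
  let b₁ := Module.finBasis ℝ M
  let b₂ := Module.finBasis ℝ N
  rw [← LinearMap.det_toMatrix (b₁.prod b₂), LinearMap.toMatrix_prodMap,
    Matrix.det_fromBlocks_zero₂₁, LinearMap.det_toMatrix, LinearMap.det_toMatrix]

/-- A shear in the second coordinate has determinant one. -/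
lemma aux_det_shear₂ (f : M →ₗ[ℝ] N) (L : M × N →ₗ[ℝ] M × N)
    (hL : ∀ z : M × N, L z = (z.1, z.2 + f z.1)) : LinearMap.det L = 1 := by
  set L' : M × N →ₗ[ℝ] M × N :=
    (LinearMap.fst ℝ M N).prod (LinearMap.snd ℝ M N - f ∘ₗ LinearMap.fst ℝ M N) with hL'
  have hcomp : L ∘ₗ L' = LinearMap.id := by
    apply LinearMap.ext
    intro z
    simp [hL, hL']
  have hunit : IsUnit (LinearMap.det L) := by
    apply IsUnit.of_mul_eq_one (LinearMap.det L')
    rw [← LinearMap.det_comp, hcomp, LinearMap.det_id]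
  set S : M × N →ₗ[ℝ] M × N :=
    (LinearMap.fst ℝ M N).prod ((2 : ℝ) • LinearMap.snd ℝ M N) with hS
  set S' : M × N →ₗ[ℝ] M × N :=
    (LinearMap.fst ℝ M N).prod ((2⁻¹ : ℝ) • LinearMap.snd ℝ M N) with hS'
  have hSS' : S ∘ₗ S' = LinearMap.id := by
    apply LinearMap.ext
    intro z
    simp [hS, hS', smul_smul]
  have hkey : S ∘ₗ L ∘ₗ S' = L ∘ₗ L := by
    apply LinearMap.ext
    intro z
    simp only [LinearMap.comp_apply, hL, hS, hS', LinearMap.prod_apply, Pi.prod,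
      LinearMap.fst_apply, LinearMap.snd_apply, LinearMap.smul_apply]
    refine Prod.ext rfl ?_
    simp [smul_add, smul_smul, two_smul]
    norm_num
    module
  have h1 : LinearMap.det S * LinearMap.det S' = 1 := by
    rw [← LinearMap.det_comp, hSS', LinearMap.det_id]
  have h2 : LinearMap.det L * LinearMap.det L = LinearMap.det L := by
    calc LinearMap.det L * LinearMap.det L = LinearMap.det (L ∘ₗ L) :=
          (LinearMap.det_comp L L).symm
      _ = LinearMap.det (S ∘ₗ L ∘ₗ S') := by rw [hkey]
      _ = LinearMap.det S * (LinearMap.det L * LinearMap.det S') := by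
          rw [LinearMap.det_comp, LinearMap.det_comp]
      _ = (LinearMap.det S * LinearMap.det S') * LinearMap.det L := by ring
      _ = LinearMap.det L := by rw [h1, one_mul]
  have hne : LinearMap.det L ≠ 0 := hunit.ne_zero
  have := mul_left_cancel₀ hne (h2.trans (mul_one (LinearMap.det L)).symm)
  exact this

/-- A shear in the first coordinate has determinant one. -/
lemma aux_det_shear₁ (g : N →ₗ[ℝ] M) (L : M × N →ₗ[ℝ] M × N)
    (hL : ∀ z : M × N, L z = (z.1 + g z.2, z.2)) : LinearMap.det L = 1 := by
  have e : (M × N) ≃ₗ[ℝ] (N × M) := LinearEquiv.prodComm ℝ M N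
  set e : (M × N) ≃ₗ[ℝ] (N × M) := LinearEquiv.prodComm ℝ M N with he
  have hconj : LinearMap.det ((e : M × N →ₗ[ℝ] N × M) ∘ₗ L ∘ₗ (e.symm : N × M →ₗ[ℝ] M × N))
      = LinearMap.det L := LinearMap.det_conj L e
  rw [← hconj]
  apply aux_det_shear₂ g
  intro z
  have h1 : (LinearEquiv.prodComm ℝ M N).symm z = (z.2, z.1) := rfl
  simp only [he, LinearMap.comp_apply, LinearEquiv.coe_coe, h1, hL,
    LinearEquiv.prodComm_apply, Prod.swap]

/-- Determinant of the block scaling map. -/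
lemma aux_det_scale (c : ℝ) (L : M × N →ₗ[ℝ] M × N)
    (hL : ∀ z : M × N, L z = (z.1, c • z.2)) :
    LinearMap.det L = c ^ Module.finrank ℝ N := by
  have : L = (LinearMap.id : M →ₗ[ℝ] M).prodMap (c • (LinearMap.id : N →ₗ[ℝ] N)) := by
    apply LinearMap.ext
    intro z
    simp [hL]
  rw [this, aux_det_prodMap, LinearMap.det_id, LinearMap.det_smul, LinearMap.det_id]
  ring

end Aux

section Calc

variable {d : ℕ}

local notation "E" => EuclideanSpace ℝ (Fin d)
local notation "Z" => EuclideanSpace ℝ (Fin d) × EuclideanSpace ℝ (Fin d)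

/-- `mvec A` as a linear map. -/
def mvecL (A : Matrix (Fin d) (Fin d) ℝ) : E →ₗ[ℝ] E where
  toFun := mvec A
  map_add' x y := by simp [mvec, Matrix.mulVec_add]
  map_smul' c x := by simp [mvec, Matrix.mulVec_smul]

/-- `mvec A` as a continuous linear map. -/
def mvecCLM (A : Matrix (Fin d) (Fin d) ℝ) : E →L[ℝ] E :=
  (mvecL A).toContinuousLinearMap

lemma xi_eq (γ t : ℝ) :
    (xi γ t : Z → Z) =
      ((ContinuousLinearMap.fst ℝ E E).prod
        (Real.exp (γ * t) • ContinuousLinearMap.snd ℝ E E) : Z →L[ℝ] Z) := by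
  funext z
  rfl

lemma xi_hasFDerivAt (γ t : ℝ) (z : Z) :
    HasFDerivAt (xi γ t)
      ((ContinuousLinearMap.fst ℝ E E).prod
        (Real.exp (γ * t) • ContinuousLinearMap.snd ℝ E E)) z := by
  rw [xi_eq]
  exact (((ContinuousLinearMap.fst ℝ E E).prod
    (Real.exp (γ * t) • ContinuousLinearMap.snd ℝ E E))).hasFDerivAt

lemma xi_det (γ t : ℝ) :
    LinearMap.det (((ContinuousLinearMap.fst ℝ E E).prod
      (Real.exp (γ * t) • ContinuousLinearMap.snd ℝ E E) : Z →L[ℝ] Z) : Z →ₗ[ℝ] Z)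
      = Real.exp (γ * t) ^ d := by
  have h := aux_det_scale (Real.exp (γ * t))
    ((((ContinuousLinearMap.fst ℝ E E).prod
      (Real.exp (γ * t) • ContinuousLinearMap.snd ℝ E E) : Z →L[ℝ] Z) : Z →ₗ[ℝ] Z))
    (fun z => rfl)
  rw [h, finrank_euclideanSpace_fin]

lemma leapfrog_hasFDerivAt {U : EuclideanSpace ℝ (Fin d) → ℝ} (hU : ContDiff ℝ 2 U)
    (Sinv : Matrix (Fin d) (Fin d) ℝ) (ε : ℝ) (z : Z) :
    ∃ D : Z →L[ℝ] Z, HasFDerivAt (leapfrog U Sinv ε) D z ∧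
      |LinearMap.det (D : Z →ₗ[ℝ] Z)| = 1 := by
  -- gradient is C¹
  have hgradC : ContDiff ℝ 1 (gradient U) := by
    have h1 : ContDiff ℝ 1 (fderiv ℝ U) := hU.fderiv_right (by norm_num)
    have : gradient U = fun q => (InnerProductSpace.toDual ℝ E).symm (fderiv ℝ U q) := rfl
    rw [this]
    exact (InnerProductSpace.toDual ℝ E).symm.contDiff.comp h1
  have hgrad : Differentiable ℝ (gradient U) := hgradC.differentiable one_ne_zero
  -- the two basic maps
  set g1 : Z → Z := fun w => (w.1, w.2 - (ε / 2) • gradient U w.1) with hg1def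
  -- derivative of g1 at a point w
  have hg1 : ∀ w : Z, HasFDerivAt g1
      ((ContinuousLinearMap.fst ℝ E E).prod
        (ContinuousLinearMap.snd ℝ E E -
          (ε / 2) • ((fderiv ℝ (gradient U) w.1).comp (ContinuousLinearMap.fst ℝ E E)))) w := by
    intro w
    apply HasFDerivAt.prodMk (hasFDerivAt_fst)
    exact (hasFDerivAt_snd).sub
      ((((hgrad w.1).hasFDerivAt).comp w hasFDerivAt_fst).const_smul (ε / 2))
  have hg1det : ∀ w : Z,
      |LinearMap.det ((((ContinuousLinearMap.fst ℝ E E).prod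
        (ContinuousLinearMap.snd ℝ E E -
          (ε / 2) • ((fderiv ℝ (gradient U) w.1).comp (ContinuousLinearMap.fst ℝ E E))))
            : Z →L[ℝ] Z) : Z →ₗ[ℝ] Z)| = 1 := by
    intro w
    have := aux_det_shear₂ ((-(ε / 2)) • (fderiv ℝ (gradient U) w.1 : E →ₗ[ℝ] E))
      ((((ContinuousLinearMap.fst ℝ E E).prod
        (ContinuousLinearMap.snd ℝ E E -
          (ε / 2) • ((fderiv ℝ (gradient U) w.1).comp (ContinuousLinearMap.fst ℝ E E))))
            : Z →L[ℝ] Z) : Z →ₗ[ℝ] Z)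
      (fun v => by
        refine Prod.ext rfl ?_
        simp [sub_eq_add_neg, neg_smul])
    rw [this]
    norm_num
  -- g2 is linear
  set B : Z →L[ℝ] Z := (ContinuousLinearMap.fst ℝ E E +
      ε • ((mvecCLM Sinv).comp (ContinuousLinearMap.snd ℝ E E))).prod
      (ContinuousLinearMap.snd ℝ E E) with hBdef
  set g2 : Z → Z := fun w => (w.1 + ε • mvec Sinv w.2, w.2) with hg2def
  have hg2eq : g2 = ⇑B := by
    funext w
    rfl
  have hg2 : ∀ w : Z, HasFDerivAt g2 B w := by
    intro w
    rw [hg2eq]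
    exact B.hasFDerivAt
  have hg2det : |LinearMap.det (B : Z →ₗ[ℝ] Z)| = 1 := by
    have := aux_det_shear₁ (ε • (mvecL Sinv)) (B : Z →ₗ[ℝ] Z)
      (fun v => by
        refine Prod.ext ?_ rfl
        rfl)
    rw [this]
    norm_num
  -- leapfrog = g1 ∘ g2 ∘ g1
  have hLF : leapfrog U Sinv ε = g1 ∘ g2 ∘ g1 := by
    funext w
    rfl
  set A1 := ((ContinuousLinearMap.fst ℝ E E).prod
        (ContinuousLinearMap.snd ℝ E E -
          (ε / 2) • ((fderiv ℝ (gradient U) z.1).comp (ContinuousLinearMap.fst ℝ E E))))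
  set w2 := g2 (g1 z) with hw2
  set A2 := ((ContinuousLinearMap.fst ℝ E E).prod
        (ContinuousLinearMap.snd ℝ E E -
          (ε / 2) • ((fderiv ℝ (gradient U) w2.1).comp (ContinuousLinearMap.fst ℝ E E))))
  refine ⟨A2.comp (B.comp A1), ?_, ?_⟩
  · rw [hLF]
    exact (hg1 w2).comp z ((hg2 (g1 z)).comp z (hg1 z))
  · rw [ContinuousLinearMap.toLinearMap_comp, ContinuousLinearMap.toLinearMap_comp,
      LinearMap.det_comp, LinearMap.det_comp, abs_mul, abs_mul,
      hg1det w2, hg1det z, hg2det]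
    norm_num

/-- Derivative and determinant for a full conformal step `ξ_t ∘ P_ε ∘ ξ_t`. -/
lemma step_hasFDerivAt {U : EuclideanSpace ℝ (Fin d) → ℝ} (hU : ContDiff ℝ 2 U)
    (Sinv : Matrix (Fin d) (Fin d) ℝ) (γ t ε : ℝ) (z : Z) :
    ∃ D : Z →L[ℝ] Z, HasFDerivAt (xi γ t ∘ leapfrog U Sinv ε ∘ xi γ t) D z ∧
      |LinearMap.det (D : Z →ₗ[ℝ] Z)| = Real.exp (γ * t) ^ d * Real.exp (γ * t) ^ d := by
  obtain ⟨DL, hDL, hdet⟩ := leapfrog_hasFDerivAt hU Sinv ε (xi γ t z)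
  set X : Z →L[ℝ] Z := (ContinuousLinearMap.fst ℝ E E).prod
      (Real.exp (γ * t) • ContinuousLinearMap.snd ℝ E E) with hXdef
  refine ⟨X.comp (DL.comp X), ?_, ?_⟩
  · exact (xi_hasFDerivAt γ t (leapfrog U Sinv ε (xi γ t z))).comp z
      (hDL.comp z (xi_hasFDerivAt γ t z))
  · rw [ContinuousLinearMap.toLinearMap_comp, ContinuousLinearMap.toLinearMap_comp,
      LinearMap.det_comp, LinearMap.det_comp, abs_mul, abs_mul, hdet, hXdef, xi_det]
    rw [abs_of_pos (pow_pos (Real.exp_pos _) _)]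
    ring

/-- Iterating a map with constant `|det|` of the derivative. -/
lemma iterate_hasFDerivAt {f : Z → Z} {a : ℝ}
    (hf : ∀ z : Z, ∃ D : Z →L[ℝ] Z, HasFDerivAt f D z ∧
      |LinearMap.det (D : Z →ₗ[ℝ] Z)| = a) (m : ℕ) :
    ∀ z : Z, ∃ D : Z →L[ℝ] Z, HasFDerivAt (f^[m]) D z ∧
      |LinearMap.det (D : Z →ₗ[ℝ] Z)| = a ^ m := by
  induction m with
  | zero =>
      intro z
      refine ⟨ContinuousLinearMap.id ℝ Z, ?_, ?_⟩
      · simpa using hasFDerivAt_id z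
      · simp [ContinuousLinearMap.coe_id, LinearMap.det_id]
  | succ n ih =>
      intro z
      obtain ⟨D1, h1, hd1⟩ := ih z
      obtain ⟨D2, h2, hd2⟩ := hf (f^[n] z)
      refine ⟨D2.comp D1, ?_, ?_⟩
      · rw [Function.iterate_succ']
        exact h2.comp z h1
      · rw [ContinuousLinearMap.toLinearMap_comp, LinearMap.det_comp, abs_mul, hd1, hd2, pow_succ]
        ring

end Calc

/-- For `U` twice continuously differentiable and any `m ≥ 1`, the full
numerical RAHMC proposal map `F = (Φ⁻_ε)^m ∘ (Φ⁺_ε)^m` is volume preserving: the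
determinant of its Jacobian `DF(z)` has absolute value `1` at every `z`. -/
theorem rahmc_proposal_volume_preserving
    (d : ℕ) (hd : 1 ≤ d) (ε : ℝ) (hε : 0 < ε) (γ : ℝ) (hγ : 0 < γ)
    (U : EuclideanSpace ℝ (Fin d) → ℝ) (hU : ContDiff ℝ 2 U)
    (S : Matrix (Fin d) (Fin d) ℝ) (hSsymm : S.IsSymm) (hSpd : S.PosDef)
    (m : ℕ) (hm : 1 ≤ m) :
    ∀ z : EuclideanSpace ℝ (Fin d) × EuclideanSpace ℝ (Fin d),
      |LinearMap.det
        (fderiv ℝ ((stepMinus U S⁻¹ γ ε)^[m] ∘ (stepPlus U S⁻¹ γ ε)^[m]) z).toLinearMap| =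
      1 := by
  intro z
  have hplus := iterate_hasFDerivAt
    (fun w => step_hasFDerivAt hU S⁻¹ γ (ε / 2) ε w) m
  have hminus := iterate_hasFDerivAt
    (fun w => step_hasFDerivAt hU S⁻¹ γ (-(ε / 2)) ε w) m
  obtain ⟨Dp, hp, hdp⟩ := hplus z
  obtain ⟨Dm, hm', hdm⟩ := hminus ((stepPlus U S⁻¹ γ ε)^[m] z)
  have hcomp : HasFDerivAt ((stepMinus U S⁻¹ γ ε)^[m] ∘ (stepPlus U S⁻¹ γ ε)^[m])
      (Dm.comp Dp) z := hm'.comp z hp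
  rw [hcomp.fderiv, ContinuousLinearMap.toLinearMap_comp, LinearMap.det_comp, abs_mul, hdm, hdp]
  have hc : Real.exp (γ * (ε / 2)) ≠ 0 := (Real.exp_pos _).ne'
  have hneg : Real.exp (γ * -(ε / 2)) = (Real.exp (γ * (ε / 2)))⁻¹ := by
    rw [mul_neg, Real.exp_neg]
  rw [hneg]
  field_simp
  rw [← mul_pow, ← mul_pow, ← mul_pow, one_div, inv_mul_cancel₀ (Real.exp_pos _).ne', one_pow,
    one_pow, one_pow]
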